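/- Fix an integer N ≥ 2 and positive reals σ_1, …, σ_N. Define c_{k,l}(σ) := tr(ρA) − 2(ρAρ)_{kl}/ρ_{kl}, where A is the (N−1)×(N−1) symmetric tridiagonal matrix with A_{ii} = σ_i² + σ_{i+1}², A_{i,i+1} = A_{i+1,i} = −σ_{i+1}², A_{ij} = 0 for |i−j| ≥ 2, and ρ is the (N−1)×(N−1) matrix with ρ_{ij} = 2·min(i,j)·(N − max(i,j))/N. For a vector α = (α_1,…,α_M) ∈ ℝ^M and l = 1,…,M−1, define c_l(α) := −(2(M−1)/M)α_1² + (2(M+1)/M)·Σ_{p=2}^{l} α_p² + ((2(M−1)(M−l) − 4l)/((M−l)M))·Σ_{p=l+1}^{M} α_p². Then for all l = 1, …, N−1, we have c_{1,l}(σ) = c_l(σ), where c_l(σ) is computed with M = N and α = (σ_1,…,σ_N). -/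

import Mathlib

private lemma sum_fin_ite {M : ℕ} (f : Fin M → ℝ) (n : ℕ) :
    (∑ k : Fin M, if (k : ℕ) = n then f k else 0) = if h : n < M then f ⟨n, h⟩ else 0 := by
  by_cases h : n < M
  · rw [dif_pos h, Finset.sum_eq_single ⟨n, h⟩]
    · simp
    · intro b _ hb
      rw [if_neg]
      intro hbn
      exact hb (by ext; simpa using hbn)
    · simp
  · rw [dif_neg h, Finset.sum_eq_zero]
    intro k _
    rw [if_neg]
    intro hk
    exact h (hk ▸ k.isLt)

private noncomputable def vv (N : ℕ) (p : Fin N) (i : Fin (N - 1)) : ℝ :=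
  (if (i : ℕ) + 1 = (p : ℕ) then 1 else 0) - (if (i : ℕ) = (p : ℕ) then 1 else 0)

private lemma sum_mul_vv {N : ℕ} (f : Fin (N - 1) → ℝ) (p : Fin N) :
    (∑ k : Fin (N - 1), f k * vv N p k)
      = (if h : 1 ≤ (p : ℕ) then f ⟨(p : ℕ) - 1, by have := p.isLt; omega⟩ else 0)
        - (if h : (p : ℕ) < N - 1 then f ⟨(p : ℕ), h⟩ else 0) := by
  by_cases hp : 1 ≤ (p : ℕ)
  · rw [dif_pos hp]
    have step : ∀ k : Fin (N - 1), f k * vv N p k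
        = (if (k : ℕ) = (p : ℕ) - 1 then f k else 0) - (if (k : ℕ) = (p : ℕ) then f k else 0) := by
      intro k; unfold vv; split_ifs <;> (try ring) <;> (exfalso; omega)
    rw [Finset.sum_congr rfl fun k _ => step k, Finset.sum_sub_distrib, sum_fin_ite, sum_fin_ite,
      dif_pos (by have := p.isLt; omega : (p : ℕ) - 1 < N - 1)]
  · rw [dif_neg hp]
    have hp0 : (p : ℕ) = 0 := by omega
    have step : ∀ k : Fin (N - 1), f k * vv N p k
        = 0 - (if (k : ℕ) = (p : ℕ) then f k else 0) := by
      intro k; unfold vv; split_ifs <;> (try ring) <;> (exfalso; omega)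
    rw [Finset.sum_congr rfl fun k _ => step k, Finset.sum_sub_distrib, sum_fin_ite,
      Finset.sum_const, smul_zero]

private lemma sum_vv_mul {N : ℕ} (f : Fin (N - 1) → ℝ) (p : Fin N) :
    (∑ k : Fin (N - 1), vv N p k * f k)
      = (if h : 1 ≤ (p : ℕ) then f ⟨(p : ℕ) - 1, by have := p.isLt; omega⟩ else 0)
        - (if h : (p : ℕ) < N - 1 then f ⟨(p : ℕ), h⟩ else 0) := by
  rw [← sum_mul_vv f p]
  exact Finset.sum_congr rfl fun k _ => mul_comm _ _

private noncomputable def AA (N : ℕ) (σ : Fin N → ℝ) : Matrix (Fin (N - 1)) (Fin (N - 1)) ℝ := fun i j =>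
  if i = j then
    σ ⟨i.1, by have := i.isLt; omega⟩ ^ 2 + σ ⟨i.1 + 1, by have := i.isLt; omega⟩ ^ 2
  else if i.1 + 1 = j.1 ∨ j.1 + 1 = i.1 then
    -σ ⟨max i.1 j.1, by have := i.isLt; have := j.isLt; omega⟩ ^ 2
  else 0

private noncomputable def rr (N : ℕ) : Matrix (Fin (N - 1)) (Fin (N - 1)) ℝ := fun i j =>
  2 * (min (i.1 + 1) (j.1 + 1) : ℕ) * ((N : ℝ) - (max (i.1 + 1) (j.1 + 1) : ℕ)) / N

private lemma rr_val {N : ℕ} (i j : Fin (N - 1)) (hij : i.1 ≤ j.1) :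
    rr N i j = 2 * ((i.1 : ℝ) + 1) * ((N : ℝ) - ((j.1 : ℝ) + 1)) / N := by
  unfold rr
  rw [Nat.min_eq_left (by omega), Nat.max_eq_right (by omega)]
  push_cast
  ring

private lemma rr_val' {N : ℕ} (i j : Fin (N - 1)) (hij : j.1 ≤ i.1) :
    rr N i j = 2 * ((j.1 : ℝ) + 1) * ((N : ℝ) - ((i.1 : ℝ) + 1)) / N := by
  unfold rr
  rw [Nat.min_eq_right (by omega), Nat.max_eq_left (by omega)]
  push_cast
  ring

private lemma AA_eq (N : ℕ) (σ : Fin N → ℝ) (i j : Fin (N - 1)) :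
    AA N σ i j = ∑ p : Fin N, σ p ^ 2 * vv N p i * vv N p j := by
  have hi := i.isLt; have hj := j.isLt
  rcases eq_or_ne i j with rfl | hij
  · have step : ∀ p : Fin N, σ p ^ 2 * vv N p i * vv N p i
        = (if (p : ℕ) = i.1 then σ p ^ 2 else 0) + (if (p : ℕ) = i.1 + 1 then σ p ^ 2 else 0) := by
      intro p; unfold vv; split_ifs <;> (try ring) <;> (exfalso; omega)
    rw [Finset.sum_congr rfl fun p _ => step p, Finset.sum_add_distrib, sum_fin_ite, sum_fin_ite,
      dif_pos (by omega : i.1 < N), dif_pos (by omega : i.1 + 1 < N)]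
    simp [AA]
  · have hij' : i.1 ≠ j.1 := fun h => hij (Fin.ext h)
    by_cases h1 : i.1 + 1 = j.1
    · have step : ∀ p : Fin N, σ p ^ 2 * vv N p i * vv N p j
          = (if (p : ℕ) = j.1 then -σ p ^ 2 else 0) := by
        intro p; unfold vv; split_ifs <;> (try ring) <;> (exfalso; omega)
      rw [Finset.sum_congr rfl fun p _ => step p, sum_fin_ite,
        dif_pos (by omega : j.1 < N)]
      have hmax : max i.1 j.1 = j.1 := by omega
      simp [AA, if_neg hij, h1, hmax]
    · by_cases h2 : j.1 + 1 = i.1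
      · have step : ∀ p : Fin N, σ p ^ 2 * vv N p i * vv N p j
            = (if (p : ℕ) = i.1 then -σ p ^ 2 else 0) := by
          intro p; unfold vv; split_ifs <;> (try ring) <;> (exfalso; omega)
        rw [Finset.sum_congr rfl fun p _ => step p, sum_fin_ite,
          dif_pos (by omega : i.1 < N)]
        have hmax : max i.1 j.1 = i.1 := by omega
        simp [AA, if_neg hij, h2, hmax]
      · have step : ∀ p : Fin N, σ p ^ 2 * vv N p i * vv N p j = 0 := by
          intro p; unfold vv; split_ifs <;> (try ring) <;> (exfalso; omega)
        rw [Finset.sum_congr rfl fun p _ => step p, Finset.sum_const, smul_zero]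
        simp [AA, if_neg hij, h1, h2]

private lemma cast_pred {n : ℕ} (h : 1 ≤ n) : ((n - 1 : ℕ) : ℝ) = (n : ℝ) - 1 := by
  rw [Nat.cast_sub h]; norm_num

private lemma u_val {N : ℕ} (hN : 2 ≤ N) (p : Fin N) :
    (∑ k : Fin (N - 1), rr N ⟨0, by have := hN; omega⟩ k * vv N p k)
      = if (p : ℕ) = 0 then -(2 * ((N : ℝ) - 1) / N) else 2 / N := by
  have hN0 : (N : ℝ) ≠ 0 := Nat.cast_ne_zero.mpr (by omega)
  rw [sum_mul_vv]
  by_cases hp : (p : ℕ) = 0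
  · rw [if_pos hp, dif_neg (by omega), dif_pos (by omega : (p : ℕ) < N - 1),
      rr_val _ _ (Nat.zero_le _)]
    simp only [hp]
    push_cast
    ring
  · rw [if_neg hp, dif_pos (by omega)]
    by_cases h2 : (p : ℕ) < N - 1
    · rw [dif_pos h2, rr_val _ _ (Nat.zero_le _), rr_val _ _ (Nat.zero_le _),
        cast_pred (by omega)]
      push_cast
      field_simp
      ring
    · have hp2 : (p : ℕ) = N - 1 := by have := p.isLt; omega
      have hc : ((p : ℕ) : ℝ) = (N : ℝ) - 1 := by
        rw [hp2, Nat.cast_sub (by omega)]; norm_num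
      rw [dif_neg h2, sub_zero, rr_val _ _ (Nat.zero_le _), cast_pred (by omega), hc]
      push_cast
      field_simp
      ring

private lemma g_val {N : ℕ} (hN : 2 ≤ N) (l : Fin (N - 1)) (p : Fin N) :
    (∑ j : Fin (N - 1), vv N p j * rr N j l)
      = if (p : ℕ) ≤ l.1 then -(2 * ((N : ℝ) - ((l.1 : ℝ) + 1)) / N)
        else 2 * ((l.1 : ℝ) + 1) / N := by
  have hN0 : (N : ℝ) ≠ 0 := Nat.cast_ne_zero.mpr (by omega)
  have hl := l.isLt
  rw [sum_vv_mul]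
  by_cases hp : (p : ℕ) = 0
  · rw [if_pos (by omega), dif_neg (by omega), dif_pos (by omega : (p : ℕ) < N - 1),
      rr_val _ _ (by simp only [Fin.val_mk]; omega : ((⟨(p : ℕ), by omega⟩ : Fin (N - 1)) : ℕ) ≤ l.1)]
    simp only [hp]
    push_cast
    ring
  · rw [dif_pos (by omega)]
    by_cases hpl : (p : ℕ) ≤ l.1
    · rw [if_pos hpl, dif_pos (by omega : (p : ℕ) < N - 1),
        rr_val _ _ (by simp only [Fin.val_mk]; omega : ((⟨(p : ℕ) - 1, by have := p.isLt; omega⟩ : Fin (N - 1)) : ℕ) ≤ l.1),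
        rr_val _ _ (by simp only [Fin.val_mk]; omega : ((⟨(p : ℕ), by omega⟩ : Fin (N - 1)) : ℕ) ≤ l.1),
        cast_pred (by omega)]
      push_cast
      field_simp
      ring
    · rw [if_neg hpl]
      by_cases h2 : (p : ℕ) < N - 1
      · rw [dif_pos h2,
          rr_val' _ _ (by simp only [Fin.val_mk]; omega : l.1 ≤ ((⟨(p : ℕ) - 1, by have := p.isLt; omega⟩ : Fin (N - 1)) : ℕ)),
          rr_val' _ _ (by simp only [Fin.val_mk]; omega : l.1 ≤ ((⟨(p : ℕ), h2⟩ : Fin (N - 1)) : ℕ)),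
          cast_pred (by omega)]
        push_cast
        field_simp
        ring
      · have hp2 : (p : ℕ) = N - 1 := by have := p.isLt; omega
        rw [dif_neg h2, sub_zero,
          rr_val' _ _ (by simp only [Fin.val_mk]; omega : l.1 ≤ ((⟨(p : ℕ) - 1, by have := p.isLt; omega⟩ : Fin (N - 1)) : ℕ)),
          cast_pred (by omega), hp2, Nat.cast_sub (by omega)]
        push_cast
        ring

private lemma t_val {N : ℕ} (hN : 2 ≤ N) (p : Fin N) :
    (∑ i : Fin (N - 1), vv N p i * (∑ k : Fin (N - 1), rr N i k * vv N p k))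
      = 2 * ((N : ℝ) - 1) / N := by
  have hN0 : (N : ℝ) ≠ 0 := Nat.cast_ne_zero.mpr (by omega)
  simp only [sum_mul_vv]
  rw [sum_vv_mul]
  by_cases hp : 1 ≤ (p : ℕ)
  · by_cases h2 : (p : ℕ) < N - 1
    · simp only [dif_pos hp, dif_pos h2]
      rw [rr_val _ _ (le_refl _), rr_val _ _ (by simp only [Fin.val_mk]; omega), rr_val' _ _ (by simp only [Fin.val_mk]; omega),
        rr_val _ _ (le_refl _), cast_pred hp]
      push_cast
      field_simp
      ring
    · have hp2 : (p : ℕ) = N - 1 := by have := p.isLt; omega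
      simp only [dif_pos hp, dif_neg h2, sub_zero]
      rw [rr_val _ _ (le_refl _), cast_pred hp, hp2, Nat.cast_sub (by omega)]
      push_cast
      field_simp
      ring
  · simp only [dif_neg hp, dif_pos (by omega : (p : ℕ) < N - 1), zero_sub]
    rw [rr_val _ _ (le_refl _)]
    have hp0 : (p : ℕ) = 0 := by omega
    simp only [hp0]
    push_cast
    ring


/-- First-row case: `c_{1,l}(σ) = c_l(σ)`, where
`c_{k,l}(σ) := tr(ρA) − 2 (ρAρ)_{kl} / ρ_{kl}` and
`c_l(α) := −(2(N−1)/N) α_1² + (2(N+1)/N) ∑_{p=2}^{l} α_p²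
          + ((2(N−1)(N−l) − 4l)/((N−l)N)) ∑_{p=l+1}^{N} α_p²`. -/
theorem ckl_first_row (N : ℕ) (hN : 2 ≤ N) (σ : Fin N → ℝ) (hσ : ∀ i, 0 < σ i) :
    let A : Matrix (Fin (N - 1)) (Fin (N - 1)) ℝ := fun i j =>
      if i = j then
        σ ⟨i.1, by have := i.isLt; omega⟩ ^ 2 + σ ⟨i.1 + 1, by have := i.isLt; omega⟩ ^ 2
      else if i.1 + 1 = j.1 ∨ j.1 + 1 = i.1 then
        -σ ⟨max i.1 j.1, by have := i.isLt; have := j.isLt; omega⟩ ^ 2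
      else 0
    let ρ : Matrix (Fin (N - 1)) (Fin (N - 1)) ℝ := fun i j =>
      2 * (min (i.1 + 1) (j.1 + 1) : ℕ) * ((N : ℝ) - (max (i.1 + 1) (j.1 + 1) : ℕ)) / N
    -- `c α l` is the quantity `c_l(α)` of the paper, with `M = N` (indices 1-based)
    let c : (Fin N → ℝ) → Fin (N - 1) → ℝ := fun α l =>
      -(2 * ((N : ℝ) - 1) / N) * α ⟨0, by omega⟩ ^ 2
        + 2 * ((N : ℝ) + 1) / N *
          (∑ p ∈ Finset.univ.filter fun p : Fin N => 1 ≤ p.1 ∧ p.1 ≤ l.1, α p ^ 2)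
        + (2 * ((N : ℝ) - 1) * ((N : ℝ) - ((l.1 : ℝ) + 1)) - 4 * ((l.1 : ℝ) + 1)) /
          (((N : ℝ) - ((l.1 : ℝ) + 1)) * N) *
          (∑ p ∈ Finset.univ.filter fun p : Fin N => l.1 < p.1, α p ^ 2)
    ∀ l : Fin (N - 1),
      Matrix.trace (ρ * A) - 2 * (ρ * A * ρ) ⟨0, by omega⟩ l / ρ ⟨0, by omega⟩ l
        = c σ l := by
  intro A ρ c l
  have h0 : 0 < N - 1 := by omega
  have hN0 : (N : ℝ) ≠ 0 := Nat.cast_ne_zero.mpr (by omega)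
  have hl := l.isLt
  have hNL : (N : ℝ) - ((l.1 : ℝ) + 1) ≠ 0 := by
    have h : (((l.1 + 1 : ℕ)) : ℝ) < ((N : ℕ) : ℝ) := Nat.cast_lt.mpr (by omega)
    push_cast at h
    linarith
  show Matrix.trace (rr N * AA N σ)
      - 2 * (rr N * AA N σ * rr N) ⟨0, h0⟩ l / rr N ⟨0, h0⟩ l
    = -(2 * ((N : ℝ) - 1) / N) * σ ⟨0, by omega⟩ ^ 2
        + 2 * ((N : ℝ) + 1) / N *
          (∑ p ∈ Finset.univ.filter fun p : Fin N => 1 ≤ p.1 ∧ p.1 ≤ l.1, σ p ^ 2)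
        + (2 * ((N : ℝ) - 1) * ((N : ℝ) - ((l.1 : ℝ) + 1)) - 4 * ((l.1 : ℝ) + 1)) /
          (((N : ℝ) - ((l.1 : ℝ) + 1)) * N) *
          (∑ p ∈ Finset.univ.filter fun p : Fin N => l.1 < p.1, σ p ^ 2)
  -- trace computation
  have e1 : ∀ i : Fin (N - 1), (rr N * AA N σ) i i
      = ∑ p : Fin N, σ p ^ 2 * (vv N p i * ∑ k, rr N i k * vv N p k) := by
    intro i
    rw [Matrix.mul_apply]
    simp only [AA_eq]
    conv_lhs => simp only [Finset.mul_sum]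
    rw [Finset.sum_comm]
    refine Finset.sum_congr rfl fun p _ => ?_
    conv_rhs => rw [Finset.mul_sum, Finset.mul_sum]
    exact Finset.sum_congr rfl fun k _ => by ring
  have htr : Matrix.trace (rr N * AA N σ)
      = ∑ p : Fin N, σ p ^ 2 * (2 * ((N : ℝ) - 1) / N) := by
    rw [Matrix.trace]
    simp only [Matrix.diag]
    rw [Finset.sum_congr rfl fun i _ => e1 i, Finset.sum_comm]
    refine Finset.sum_congr rfl fun p _ => ?_
    rw [← Finset.mul_sum, t_val hN p]
  -- entry computation
  have inner : ∀ j, (rr N * AA N σ) ⟨0, h0⟩ j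
      = ∑ p : Fin N, σ p ^ 2 * ((∑ k, rr N ⟨0, h0⟩ k * vv N p k) * vv N p j) := by
    intro j
    rw [Matrix.mul_apply]
    simp only [AA_eq]
    conv_lhs => simp only [Finset.mul_sum]
    rw [Finset.sum_comm]
    refine Finset.sum_congr rfl fun p _ => ?_
    conv_rhs => rw [Finset.sum_mul, Finset.mul_sum]
    exact Finset.sum_congr rfl fun k _ => by ring
  have e2 : (rr N * AA N σ * rr N) ⟨0, h0⟩ l
      = ∑ p : Fin N,
          σ p ^ 2 * ((∑ k, rr N ⟨0, h0⟩ k * vv N p k) * (∑ j, vv N p j * rr N j l)) := by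
    rw [Matrix.mul_apply, Finset.sum_congr rfl fun j _ => by rw [inner j]]
    conv_lhs => simp only [Finset.sum_mul]
    rw [Finset.sum_comm]
    refine Finset.sum_congr rfl fun p _ => ?_
    conv_rhs => rw [Finset.mul_sum, Finset.mul_sum]
    refine Finset.sum_congr rfl fun j _ => ?_
    rw [← Finset.sum_mul Finset.univ (fun x => rr N ⟨0, h0⟩ x * vv N p x) (vv N p j)]
    ring
  have hR : rr N ⟨0, h0⟩ l = 2 * ((N : ℝ) - ((l.1 : ℝ) + 1)) / N := by
    rw [rr_val _ _ (Nat.zero_le _)]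
    norm_num
  rw [htr, e2, hR]
  simp only [u_val hN, g_val hN l]
  rw [Finset.mul_sum, Finset.sum_div, ← Finset.sum_sub_distrib]
  have hsplit : ∀ f : Fin N → ℝ,
      (∑ p : Fin N, f p)
        = f ⟨0, by omega⟩
          + (∑ p ∈ Finset.univ.filter fun p : Fin N => 1 ≤ p.1 ∧ p.1 ≤ l.1, f p)
          + (∑ p ∈ Finset.univ.filter fun p : Fin N => l.1 < p.1, f p) := by
    intro f
    rw [← Finset.sum_filter_add_sum_filter_not Finset.univ (fun p : Fin N => p.1 ≤ l.1) f]
    congr 1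
    · rw [← Finset.sum_filter_add_sum_filter_not
          (Finset.univ.filter fun p : Fin N => p.1 ≤ l.1) (fun p => p.1 = 0) f,
        Finset.filter_filter, Finset.filter_filter]
      congr 1
      · rw [show (Finset.univ.filter fun p : Fin N => p.1 ≤ l.1 ∧ p.1 = 0)
              = {(⟨0, by omega⟩ : Fin N)} by
            ext p
            simp [Fin.ext_iff]
            omega,
          Finset.sum_singleton]
      · refine Finset.sum_congr ?_ (fun _ _ => rfl)
        ext p
        simp
        omega
    · refine Finset.sum_congr ?_ (fun _ _ => rfl)
      ext p
      simp [not_le]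
  rw [hsplit]
  congr 1
  · congr 1
    · -- p = 0 term
      rw [if_pos (by simp only [Fin.val_mk] : ((⟨0, by omega⟩ : Fin N) : ℕ) = 0),
        if_pos (by simp only [Fin.val_mk]; omega : ((⟨0, by omega⟩ : Fin N) : ℕ) ≤ l.1)]
      field_simp
      ring
    · -- middle terms
      rw [Finset.mul_sum]
      refine Finset.sum_congr rfl fun p hp => ?_
      simp only [Finset.mem_filter] at hp
      rw [if_neg (by omega), if_pos (by omega)]
      field_simp
      ring
  · -- tail terms
    rw [Finset.mul_sum]
    refine Finset.sum_congr rfl fun p hp => ?_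
    simp only [Finset.mem_filter] at hp
    rw [if_neg (by omega), if_neg (by omega)]
    field_simp
    ring
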